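/- Let g* be the quotient map of the equivalence relation x ∼ x′ iff P(Y|X=x) = P(Y|X=x′). If g is any function of X such that X → g(X) → Y is a Markov chain, then g*(X) is a function of g(X) almost surely; consequently H(g*(X)) ≤ H(g(X)). -/

import Mathlib

open scoped Classical
open Finset Real

noncomputable section

variable {Ω : Type*} [Fintype Ω]

/-- Pushforward probability of value `x` under random variable `X` w.r.t. pmf `p`. -/
def dist' {α : Type*} (p : Ω → ℝ) (X : Ω → α) (x : α) : ℝ :=
  ∑ ω, if X ω = x then p ω else 0

/-- Shannon entropy, base 2. -/
def ent {α : Type*} [Fintype α] (p : Ω → ℝ) (X : Ω → α) : ℝ :=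
  -∑ x, dist' p X x * Real.logb 2 (dist' p X x)

/-- Conditional entropy `H(X | Y)`. -/
def condEnt {α β : Type*} [Fintype α] [Fintype β] (p : Ω → ℝ) (X : Ω → α) (Y : Ω → β) : ℝ :=
  ent p (fun ω => (X ω, Y ω)) - ent p Y

/-- Mutual information `I(X ∧ Y)`. -/
def mi {α β : Type*} [Fintype α] [Fintype β] (p : Ω → ℝ) (X : Ω → α) (Y : Ω → β) : ℝ :=
  ent p X + ent p Y - ent p (fun ω => (X ω, Y ω))

/-- Conditional mutual information `I(X ∧ Y | Z)`. -/
def cmi {α β γ : Type*} [Fintype α] [Fintype β] [Fintype γ]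
    (p : Ω → ℝ) (X : Ω → α) (Y : Ω → β) (Z : Ω → γ) : ℝ :=
  ent p (fun ω => (X ω, Z ω)) + ent p (fun ω => (Y ω, Z ω))
    - ent p (fun ω => ((X ω, Y ω), Z ω)) - ent p Z

/-- `p` is a probability mass function on `Ω`. -/
def IsPMF (p : Ω → ℝ) : Prop := (∀ ω, 0 ≤ p ω) ∧ ∑ ω, p ω = 1

section Helpers
set_option linter.unusedSectionVars false
variable {α β : Type*} [Fintype α] [Fintype β] (p : Ω → ℝ)

lemma dist'_nonneg (hp : ∀ ω, 0 ≤ p ω) (W : Ω → α) (a : α) : 0 ≤ dist' p W a :=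
  Finset.sum_nonneg fun ω _ => by split <;> simp [hp ω]

lemma sum_dist' (W : Ω → α) : ∑ a, dist' p W a = ∑ ω, p ω := by
  simp only [dist']
  rw [Finset.sum_comm]
  exact Finset.sum_congr rfl fun ω _ => by simp

lemma dist'_comp (W : Ω → α) (f : α → β) (c : β) :
    dist' p (fun ω => f (W ω)) c = ∑ w, if f w = c then dist' p W w else 0 := by
  unfold dist'
  symm
  calc ∑ w, (if f w = c then ∑ ω, if W ω = w then p ω else 0 else 0)
      = ∑ w, ∑ ω, (if W ω = w then (if f w = c then p ω else 0) else 0) := by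
        refine Finset.sum_congr rfl fun w _ => ?_
        by_cases h2 : f w = c <;> simp [h2]
    _ = ∑ ω, ∑ w, (if W ω = w then (if f w = c then p ω else 0) else 0) := Finset.sum_comm
    _ = ∑ ω, if f (W ω) = c then p ω else 0 := by
        refine Finset.sum_congr rfl fun ω _ => ?_
        rw [Finset.sum_ite_eq Finset.univ (W ω) (fun w => if f w = c then p ω else 0)]
        simp

lemma dist'_le_comp (hp : ∀ ω, 0 ≤ p ω) (W : Ω → α) (f : α → β) (w : α) :
    dist' p W w ≤ dist' p (fun ω => f (W ω)) (f w) := by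
  calc dist' p W w = (if f w = f w then dist' p W w else 0) := by rw [if_pos rfl]
    _ ≤ ∑ w', if f w' = f w then dist' p W w' else 0 :=
        Finset.single_le_sum (f := fun w' => if f w' = f w then dist' p W w' else 0)
          (fun i _ => by split <;> simp [dist'_nonneg p hp W i]) (Finset.mem_univ w)
    _ = dist' p (fun ω => f (W ω)) (f w) := (dist'_comp p W f (f w)).symm

lemma marg_fst (A : Ω → α) (B : Ω → β) (a : α) :
    dist' p A a = ∑ b, dist' p (fun ω => (A ω, B ω)) (a, b) := by
  simp only [dist']
  rw [Finset.sum_comm]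
  refine Finset.sum_congr rfl fun ω _ => ?_
  simp [Prod.ext_iff, ite_and, Finset.sum_ite_eq]

lemma marg_snd (A : Ω → α) (B : Ω → β) (b : β) :
    dist' p B b = ∑ a, dist' p (fun ω => (A ω, B ω)) (a, b) := by
  simp only [dist']
  rw [Finset.sum_comm]
  refine Finset.sum_congr rfl fun ω _ => ?_
  simp [Prod.ext_iff, ite_and, Finset.sum_ite_eq]

lemma ent_congr (W W' : Ω → α) (h : ∀ a, dist' p W a = dist' p W' a) :
    ent p W = ent p W' := by
  unfold ent
  congr 1
  exact Finset.sum_congr rfl fun a _ => by rw [h]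

lemma ent_comp_inj (φ : α → β) (hφ : Function.Injective φ) (W : Ω → α) :
    ent p (fun ω => φ (W ω)) = ent p W := by
  unfold ent
  congr 1
  have h0 : ∀ c, c ∉ Finset.univ.image φ → dist' p (fun ω => φ (W ω)) c = 0 := by
    intro c hc
    rw [dist'_comp]
    refine Finset.sum_eq_zero fun w _ => ?_
    rw [if_neg]
    exact fun h => hc (Finset.mem_image.mpr ⟨w, Finset.mem_univ w, h⟩)
  have h1 : ∀ w, dist' p (fun ω => φ (W ω)) (φ w) = dist' p W w := by
    intro w
    unfold dist'
    exact Finset.sum_congr rfl fun ω _ => by simp [hφ.eq_iff]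
  calc ∑ c, dist' p (fun ω => φ (W ω)) c * Real.logb 2 (dist' p (fun ω => φ (W ω)) c)
      = ∑ c ∈ Finset.univ.image φ,
          dist' p (fun ω => φ (W ω)) c * Real.logb 2 (dist' p (fun ω => φ (W ω)) c) := by
        refine (Finset.sum_subset (Finset.subset_univ _) fun c _ hc => ?_).symm
        rw [h0 c hc]; simp
    _ = ∑ w, dist' p (fun ω => φ (W ω)) (φ w) * Real.logb 2 (dist' p (fun ω => φ (W ω)) (φ w)) :=
        Finset.sum_image fun a _ b _ h => hφ h
    _ = ∑ w, dist' p W w * Real.logb 2 (dist' p W w) := by simp [h1]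

lemma ent_comp_le (hp : ∀ ω, 0 ≤ p ω) (f : α → β) (W : Ω → α) :
    ent p (fun ω => f (W ω)) ≤ ent p W := by
  have hr : ∀ w, 0 ≤ dist' p W w := dist'_nonneg p hp W
  have hle : ∀ w, dist' p W w ≤ dist' p (fun ω => f (W ω)) (f w) := dist'_le_comp p hp W f
  have key : ∑ c, dist' p (fun ω => f (W ω)) c * Real.logb 2 (dist' p (fun ω => f (W ω)) c)
      = ∑ w, dist' p W w * Real.logb 2 (dist' p (fun ω => f (W ω)) (f w)) := by
    calc ∑ c, dist' p (fun ω => f (W ω)) c * Real.logb 2 (dist' p (fun ω => f (W ω)) c)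
        = ∑ c, ∑ w, (if f w = c then dist' p W w * Real.logb 2 (dist' p (fun ω => f (W ω)) c) else 0) := by
          refine Finset.sum_congr rfl fun c _ => ?_
          rw [dist'_comp, Finset.sum_mul]
          refine Finset.sum_congr rfl fun w _ => ?_
          split <;> simp
      _ = ∑ w, ∑ c, (if f w = c then dist' p W w * Real.logb 2 (dist' p (fun ω => f (W ω)) c) else 0) :=
          Finset.sum_comm
      _ = ∑ w, dist' p W w * Real.logb 2 (dist' p (fun ω => f (W ω)) (f w)) := by
          refine Finset.sum_congr rfl fun w _ => ?_
          rw [Finset.sum_ite_eq Finset.univ (f w)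
            (fun c => dist' p W w * Real.logb 2 (dist' p (fun ω => f (W ω)) c))]
          simp
  unfold ent
  rw [neg_le_neg_iff, key]
  refine Finset.sum_le_sum fun w _ => ?_
  rcases eq_or_lt_of_le (hr w) with h | h
  · simp [← h]
  · exact mul_le_mul_of_nonneg_left
      (Real.logb_le_logb_of_le one_lt_two h (hle w)) (hr w)

end Helpers

lemma gibbs_eq {ι : Type*} [Fintype ι] (a b : ι → ℝ) (ha : ∀ i, 0 ≤ a i)
    (hb : ∀ i, 0 ≤ b i) (hab : ∀ i, 0 < a i → 0 < b i)
    (hsa : ∑ i, a i = 1) (hsb : ∑ i, b i = 1)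
    (hlog : ∑ i, a i * (Real.log (a i) - Real.log (b i)) = 0) : ∀ i, a i = b i := by
  have key : ∀ i, a i - b i ≤ a i * (Real.log (a i) - Real.log (b i)) := by
    intro i
    rcases eq_or_lt_of_le (ha i) with h | h
    · rw [← h]
      simpa using hb i
    · have hbi := hab i h
      have hu : 0 < b i / a i := div_pos hbi h
      have hl := Real.log_le_sub_one_of_pos hu
      rw [Real.log_div hbi.ne' h.ne'] at hl
      have h3 := mul_le_mul_of_nonneg_left hl (le_of_lt h)
      have h2 : a i * (b i / a i - 1) = b i - a i := by field_simp
      nlinarith [h3]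
  have hzero : ∀ i ∈ Finset.univ,
      a i * (Real.log (a i) - Real.log (b i)) - (a i - b i) = 0 := by
    have hs : ∑ i, (a i * (Real.log (a i) - Real.log (b i)) - (a i - b i)) = 0 := by
      rw [Finset.sum_sub_distrib, hlog, Finset.sum_sub_distrib, hsa, hsb]; ring
    intro i hi
    exact (Finset.sum_eq_zero_iff_of_nonneg (fun j _ => sub_nonneg.mpr (key j))).mp hs i hi
  intro i
  have heq : a i - b i = a i * (Real.log (a i) - Real.log (b i)) := by
    have := hzero i (Finset.mem_univ i); linarith
  rcases eq_or_lt_of_le (ha i) with h | h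
  · rw [← h] at heq ⊢
    simp only [zero_mul, zero_sub] at heq
    linarith
  · have hbi := hab i h
    by_contra hne
    have hu : 0 < b i / a i := div_pos hbi h
    have hne1 : b i / a i ≠ 1 := by
      intro h1
      rw [div_eq_one_iff_eq h.ne'] at h1
      exact hne h1.symm
    have hl := Real.log_lt_sub_one_of_pos hu hne1
    rw [Real.log_div hbi.ne' h.ne'] at hl
    have h3 := mul_lt_mul_of_pos_left hl h
    have h2 : a i * (b i / a i - 1) = b i - a i := by field_simp
    nlinarith [h3]

set_option maxHeartbeats 1000000 in
lemma condIndep {𝒳 𝒴 δ : Type*} [Fintype 𝒳] [Fintype 𝒴] [Fintype δ]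
    (p : Ω → ℝ) (hp : IsPMF p) (X : Ω → 𝒳) (Y : Ω → 𝒴) (g : 𝒳 → δ)
    (hg : cmi p X Y (fun ω => g (X ω)) = 0) (x : 𝒳) (y : 𝒴) :
    dist' p (fun ω => (X ω, Y ω)) (x, y) * dist' p (fun ω => g (X ω)) (g x)
      = dist' p X x * dist' p (fun ω => (Y ω, g (X ω))) (y, g x) := by
  have hp0 := hp.1
  -- marginals
  have F1 : ∀ x, dist' p X x = ∑ y, dist' p (fun ω => (X ω, Y ω)) (x, y) :=
    fun x => marg_fst p X Y x
  have F2 : ∀ z, dist' p (fun ω => g (X ω)) z = ∑ x, if g x = z then dist' p X x else 0 :=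
    dist'_comp p X g
  have F4 : ∀ z, dist' p (fun ω => g (X ω)) z
      = ∑ y, dist' p (fun ω => (Y ω, g (X ω))) (y, z) :=
    fun z => marg_snd p Y (fun ω => g (X ω)) z
  have F3 : ∀ y z, dist' p (fun ω => (Y ω, g (X ω))) (y, z)
      = ∑ x, if g x = z then dist' p (fun ω => (X ω, Y ω)) (x, y) else 0 := by
    intro y z
    have h := dist'_comp p (fun ω => (X ω, Y ω)) (fun w => (w.2, g w.1)) (y, z)
    rw [Fintype.sum_prod_type] at h
    refine Eq.trans rfl (Eq.trans h ?_)
    refine Finset.sum_congr rfl fun x _ => ?_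
    by_cases h2 : g x = z
    · simp [Prod.ext_iff, h2, ite_and, Finset.sum_ite_eq']
    · simp [Prod.ext_iff, h2]
  -- positivity facts
  have pos : ∀ x y, 0 < dist' p (fun ω => (X ω, Y ω)) (x, y) →
      0 < dist' p X x ∧ 0 < dist' p (fun ω => (Y ω, g (X ω))) (y, g x) ∧
      0 < dist' p (fun ω => g (X ω)) (g x) := by
    intro x y hq
    have hx : 0 < dist' p X x := by
      have hle : dist' p (fun ω => (X ω, Y ω)) (x, y) ≤ dist' p X x := by
        rw [F1 x]
        exact Finset.single_le_sum
          (f := fun y' => dist' p (fun ω => (X ω, Y ω)) (x, y'))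
          (fun i _ => dist'_nonneg p hp0 _ _) (Finset.mem_univ y)
      linarith
    refine ⟨hx, ?_, lt_of_lt_of_le hx (dist'_le_comp p hp0 X g x)⟩
    have hle : dist' p (fun ω => (X ω, Y ω)) (x, y)
        ≤ dist' p (fun ω => (Y ω, g (X ω))) (y, g x) := by
      rw [F3 y (g x)]
      calc dist' p (fun ω => (X ω, Y ω)) (x, y)
          = (if g x = g x then dist' p (fun ω => (X ω, Y ω)) (x, y) else 0) := by rw [if_pos rfl]
        _ ≤ ∑ x', if g x' = g x then dist' p (fun ω => (X ω, Y ω)) (x', y) else 0 :=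
            Finset.single_le_sum
              (f := fun x' => if g x' = g x then dist' p (fun ω => (X ω, Y ω)) (x', y) else 0)
              (fun i _ => by split <;> simp [dist'_nonneg p hp0]) (Finset.mem_univ x)
    linarith
  -- entropy reductions
  have E5 : ent p (fun ω => (X ω, g (X ω))) = ent p X :=
    ent_comp_inj p (fun x => (x, g x)) (fun u v h => (Prod.ext_iff.mp h).1) X
  have E6 : ent p (fun ω => ((X ω, Y ω), g (X ω))) = ent p (fun ω => (X ω, Y ω)) :=
    ent_comp_inj p (fun w => (w, g w.1)) (fun u v h => (Prod.ext_iff.mp h).1)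
      (fun ω => (X ω, Y ω))
  have hcm : cmi p X Y (fun ω => g (X ω))
      = ent p (fun ω => (X ω, g (X ω))) + ent p (fun ω => (Y ω, g (X ω)))
        - ent p (fun ω => ((X ω, Y ω), g (X ω))) - ent p (fun ω => g (X ω)) := rfl
  have hg' : ent p X + ent p (fun ω => (Y ω, g (X ω)))
      - ent p (fun ω => (X ω, Y ω)) - ent p (fun ω => g (X ω)) = 0 := by
    rw [hcm, E5, E6] at hg; linarith
  have HX : ent p X
      = -∑ x, ∑ y, dist' p (fun ω => (X ω, Y ω)) (x, y) * Real.logb 2 (dist' p X x) := by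
    unfold ent
    congr 1
    refine Finset.sum_congr rfl fun x _ => ?_
    nth_rewrite 1 [F1 x]
    rw [Finset.sum_mul]
  have HXY : ent p (fun ω => (X ω, Y ω))
      = -∑ x, ∑ y, dist' p (fun ω => (X ω, Y ω)) (x, y)
          * Real.logb 2 (dist' p (fun ω => (X ω, Y ω)) (x, y)) := by
    unfold ent
    rw [Fintype.sum_prod_type]
  have HZ : ent p (fun ω => g (X ω))
      = -∑ x, ∑ y, dist' p (fun ω => (X ω, Y ω)) (x, y)
          * Real.logb 2 (dist' p (fun ω => g (X ω)) (g x)) := by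
    unfold ent
    congr 1
    calc ∑ z, dist' p (fun ω => g (X ω)) z * Real.logb 2 (dist' p (fun ω => g (X ω)) z)
        = ∑ z, ∑ x, (if g x = z then dist' p X x
            * Real.logb 2 (dist' p (fun ω => g (X ω)) z) else 0) := by
          refine Finset.sum_congr rfl fun z _ => ?_
          nth_rewrite 1 [F2 z]
          rw [Finset.sum_mul]
          exact Finset.sum_congr rfl fun x _ => by split <;> simp
      _ = ∑ x, ∑ z, (if g x = z then dist' p X x
            * Real.logb 2 (dist' p (fun ω => g (X ω)) z) else 0) := Finset.sum_comm
      _ = ∑ x, dist' p X x * Real.logb 2 (dist' p (fun ω => g (X ω)) (g x)) := by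
          refine Finset.sum_congr rfl fun x _ => ?_
          rw [Finset.sum_ite_eq Finset.univ (g x)
            (fun z => dist' p X x * Real.logb 2 (dist' p (fun ω => g (X ω)) z))]
          simp
      _ = ∑ x, ∑ y, dist' p (fun ω => (X ω, Y ω)) (x, y)
            * Real.logb 2 (dist' p (fun ω => g (X ω)) (g x)) := by
          refine Finset.sum_congr rfl fun x _ => ?_
          rw [F1 x, Finset.sum_mul]
  have HYZ : ent p (fun ω => (Y ω, g (X ω)))
      = -∑ x, ∑ y, dist' p (fun ω => (X ω, Y ω)) (x, y)
          * Real.logb 2 (dist' p (fun ω => (Y ω, g (X ω))) (y, g x)) := by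
    unfold ent
    congr 1
    rw [Fintype.sum_prod_type]
    calc ∑ y', ∑ z, dist' p (fun ω => (Y ω, g (X ω))) (y', z)
            * Real.logb 2 (dist' p (fun ω => (Y ω, g (X ω))) (y', z))
        = ∑ y', ∑ z, ∑ x, (if g x = z then dist' p (fun ω => (X ω, Y ω)) (x, y')
            * Real.logb 2 (dist' p (fun ω => (Y ω, g (X ω))) (y', z)) else 0) := by
          refine Finset.sum_congr rfl fun y' _ => Finset.sum_congr rfl fun z _ => ?_
          nth_rewrite 1 [F3 y' z]
          rw [Finset.sum_mul]
          exact Finset.sum_congr rfl fun x _ => by split <;> simp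
      _ = ∑ y', ∑ x, ∑ z, (if g x = z then dist' p (fun ω => (X ω, Y ω)) (x, y')
            * Real.logb 2 (dist' p (fun ω => (Y ω, g (X ω))) (y', z)) else 0) :=
          Finset.sum_congr rfl fun y' _ => Finset.sum_comm
      _ = ∑ y', ∑ x, dist' p (fun ω => (X ω, Y ω)) (x, y')
            * Real.logb 2 (dist' p (fun ω => (Y ω, g (X ω))) (y', g x)) := by
          refine Finset.sum_congr rfl fun y' _ => Finset.sum_congr rfl fun x _ => ?_
          rw [Finset.sum_ite_eq Finset.univ (g x)
            (fun z => dist' p (fun ω => (X ω, Y ω)) (x, y')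
              * Real.logb 2 (dist' p (fun ω => (Y ω, g (X ω))) (y', z)))]
          simp
      _ = ∑ x, ∑ y, dist' p (fun ω => (X ω, Y ω)) (x, y)
            * Real.logb 2 (dist' p (fun ω => (Y ω, g (X ω))) (y, g x)) := Finset.sum_comm
  have Hsum : ∑ x, ∑ y, dist' p (fun ω => (X ω, Y ω)) (x, y) *
      (Real.logb 2 (dist' p (fun ω => (X ω, Y ω)) (x, y))
        + Real.logb 2 (dist' p (fun ω => g (X ω)) (g x))
        - Real.logb 2 (dist' p X x)
        - Real.logb 2 (dist' p (fun ω => (Y ω, g (X ω))) (y, g x))) = 0 := by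
    rw [HX, HYZ, HXY, HZ] at hg'
    simp only [mul_add, mul_sub, Finset.sum_add_distrib, Finset.sum_sub_distrib]
    linarith [hg']
  -- Gibbs / log-sum equality
  have hsb_per : ∀ x, ∑ y, dist' p X x * dist' p (fun ω => (Y ω, g (X ω))) (y, g x)
      / dist' p (fun ω => g (X ω)) (g x) = dist' p X x := by
    intro x
    rw [← Finset.sum_div, ← Finset.mul_sum, ← F4 (g x)]
    by_cases h : dist' p (fun ω => g (X ω)) (g x) = 0
    · have hx0 : dist' p X x = 0 := by
        have h1 := dist'_le_comp p hp0 X g x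
        have h2 := dist'_nonneg p hp0 X x
        linarith [h.le, h.ge]
      rw [h, hx0]
      simp
    · rw [mul_div_assoc, div_self h, mul_one]
  have hgibbs := gibbs_eq (ι := 𝒳 × 𝒴)
    (fun w => dist' p (fun ω => (X ω, Y ω)) w)
    (fun w => dist' p X w.1 * dist' p (fun ω => (Y ω, g (X ω))) (w.2, g w.1)
      / dist' p (fun ω => g (X ω)) (g w.1))
    (fun w => dist'_nonneg p hp0 _ w)
    (fun w => div_nonneg (mul_nonneg (dist'_nonneg p hp0 _ _) (dist'_nonneg p hp0 _ _))
      (dist'_nonneg p hp0 _ _))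
    (fun w hw => by
      obtain ⟨h1, h2, h3⟩ := pos w.1 w.2 (by simpa using hw)
      exact div_pos (mul_pos h1 h2) h3)
    (by rw [sum_dist' p (fun ω => (X ω, Y ω)), hp.2])
    (by
      rw [Fintype.sum_prod_type]
      dsimp only
      calc ∑ x, ∑ y, dist' p X x * dist' p (fun ω => (Y ω, g (X ω))) (y, g x)
              / dist' p (fun ω => g (X ω)) (g x)
          = ∑ x, dist' p X x := Finset.sum_congr rfl fun x _ => hsb_per x
        _ = 1 := by rw [sum_dist' p X, hp.2])
    (by
      rw [Fintype.sum_prod_type]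
      dsimp only
      have term : ∀ x y, dist' p (fun ω => (X ω, Y ω)) (x, y)
            * (Real.log (dist' p (fun ω => (X ω, Y ω)) (x, y))
              - Real.log (dist' p X x * dist' p (fun ω => (Y ω, g (X ω))) (y, g x)
                / dist' p (fun ω => g (X ω)) (g x)))
          = (dist' p (fun ω => (X ω, Y ω)) (x, y) *
              (Real.logb 2 (dist' p (fun ω => (X ω, Y ω)) (x, y))
                + Real.logb 2 (dist' p (fun ω => g (X ω)) (g x))
                - Real.logb 2 (dist' p X x)
                - Real.logb 2 (dist' p (fun ω => (Y ω, g (X ω))) (y, g x)))) * Real.log 2 := by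
        intro x y
        rcases eq_or_lt_of_le (dist'_nonneg p hp0 (fun ω => (X ω, Y ω)) (x, y)) with h | h
        · rw [← h]; ring
        · obtain ⟨h1, h2, h3⟩ := pos x y h
          rw [Real.log_div (mul_pos h1 h2).ne' h3.ne', Real.log_mul h1.ne' h2.ne']
          simp only [Real.logb]
          have hl2 : Real.log 2 ≠ 0 := (Real.log_pos one_lt_two).ne'
          rw [← add_div, ← sub_div, ← sub_div, mul_assoc,
            div_mul_cancel₀ _ hl2]
          ring
      simp only [term]
      simp only [← Finset.sum_mul]
      rw [Hsum, zero_mul])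
  have hfin := hgibbs (x, y)
  dsimp only at hfin
  by_cases h : dist' p (fun ω => g (X ω)) (g x) = 0
  · have hx0 : dist' p X x = 0 := by
      have h1 := dist'_le_comp p hp0 X g x
      have h2 := dist'_nonneg p hp0 X x
      linarith [h.le, h.ge]
    rw [h, hx0]
    ring
  · rw [hfin, div_mul_cancel₀ _ h]


set_option maxHeartbeats 1000000 in
/-- Minimality of `g*`: if `X -∘- g(X) -∘- Y` then `g*(X)` is a.s. a function of `g(X)`,
and consequently `H(g*(X)) ≤ H(g(X))`. -/
theorem stmt5 {Ω 𝒳 𝒴 γ δ : Type*} [Fintype Ω] [Fintype 𝒳] [Fintype 𝒴] [Fintype γ] [Fintype δ]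
    (p : Ω → ℝ) (hp : IsPMF p) (X : Ω → 𝒳) (Y : Ω → 𝒴) (gstar : 𝒳 → γ)
    (hquot : ∀ x x', 0 < dist' p X x → 0 < dist' p X x' →
      (gstar x = gstar x' ↔
        ∀ y, dist' p (fun ω => (X ω, Y ω)) (x, y) / dist' p X x
           = dist' p (fun ω => (X ω, Y ω)) (x', y) / dist' p X x'))
    (g : 𝒳 → δ) (hg : cmi p X Y (fun ω => g (X ω)) = 0) :
    (∃ f : δ → γ, (∑ ω, if f (g (X ω)) = gstar (X ω) then p ω else 0) = 1) ∧
    ent p (fun ω => gstar (X ω)) ≤ ent p (fun ω => g (X ω)) := by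
  have hp0 := hp.1
  have hN : Nonempty Ω := by
    by_contra h
    have hE : IsEmpty Ω := not_nonempty_iff.mp h
    have h2 := hp.2
    rw [Finset.univ_eq_empty, Finset.sum_empty] at h2
    exact zero_ne_one h2
  haveI := hN
  haveI : Nonempty γ := ⟨gstar (X (Classical.arbitrary Ω))⟩
  have key := condIndep p hp X Y g hg
  have same : ∀ x x', g x = g x' → 0 < dist' p X x → 0 < dist' p X x' →
      gstar x = gstar x' := by
    intro x x' he hx hx'
    have hz : 0 < dist' p (fun ω => g (X ω)) (g x) :=
      lt_of_lt_of_le hx (dist'_le_comp p hp0 X g x)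
    refine (hquot x x' hx hx').mpr fun y => ?_
    have k1 := key x y
    have k2 := key x' y
    rw [← he] at k2
    rw [div_eq_div_iff hx.ne' hx'.ne']
    apply mul_right_cancel₀ hz.ne'
    linear_combination dist' p X x' * k1 - dist' p X x * k2
  let f : δ → γ := fun z =>
    if h : ∃ x, g x = z ∧ 0 < dist' p X x then gstar h.choose else Classical.arbitrary γ
  have hf : ∀ ω, p ω ≠ 0 → f (g (X ω)) = gstar (X ω) := by
    intro ω hω
    have hx : 0 < dist' p X (X ω) := by
      have hle : p ω ≤ dist' p X (X ω) :=
        calc p ω = (if X ω = X ω then p ω else 0) := by rw [if_pos rfl]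
          _ ≤ ∑ ω', if X ω' = X ω then p ω' else 0 :=
              Finset.single_le_sum (f := fun ω' => if X ω' = X ω then p ω' else 0)
                (fun i _ => by split <;> simp [hp0 i]) (Finset.mem_univ ω)
          _ = dist' p X (X ω) := rfl
      have := lt_of_le_of_ne (hp0 ω) (Ne.symm hω)
      linarith
    have hex : ∃ x, g x = g (X ω) ∧ 0 < dist' p X x := ⟨X ω, rfl, hx⟩
    have hfval : f (g (X ω)) = gstar hex.choose := by
      simp only [f]
      rw [dif_pos hex]
    obtain ⟨he, hxp⟩ := hex.choose_spec
    rw [hfval]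
    exact same _ _ he hxp hx
  constructor
  · refine ⟨f, ?_⟩
    have hc : ∀ ω ∈ Finset.univ, (if f (g (X ω)) = gstar (X ω) then p ω else 0) = p ω := by
      intro ω _
      by_cases hω : p ω = 0
      · split <;> simp [hω]
      · rw [if_pos (hf ω hω)]
    rw [Finset.sum_congr rfl hc, hp.2]
  · have hdist : ∀ c, dist' p (fun ω => gstar (X ω)) c = dist' p (fun ω => f (g (X ω))) c := by
      intro c
      unfold dist'
      refine Finset.sum_congr rfl fun ω _ => ?_
      dsimp only
      by_cases hω : p ω = 0
      · simp [hω]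
      · simp only [hf ω hω]
    calc ent p (fun ω => gstar (X ω)) = ent p (fun ω => f (g (X ω))) :=
          ent_congr p _ _ hdist
      _ ≤ ent p (fun ω => g (X ω)) := ent_comp_le p hp0 f (fun ω => g (X ω))
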